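/- Let (𝒜, A, A') be a quasi-twilled associative algebra over a field K with projection p' : 𝒜 → A' determined by the decomposition 𝒜 = A ⊕ A', and let B : A' → A be a linear map such that the set {B(u) + u : u ∈ A'} is closed under the multiplication of 𝒜 (i.e., B is a left deformation map). Then the bilinear operation β^B on A' defined by β^B(u,v) = p'((B(u) + u)·(B(v) + v)) is associative, i.e., (A', β^B) is an associative algebra. -/

import Mathlib

/-- `β^B(u,v) = p'((B(u) + u)·(B(v) + v))`, where `p'` is the projection onto `A'`
along `A`. -/
noncomputable def betaB {K 𝓐 : Type*} [Field K] [AddCommGroup 𝓐] [Module K 𝓐]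
    (m : 𝓐 →ₗ[K] 𝓐 →ₗ[K] 𝓐)
    {A A' : Submodule K 𝓐} (hcompl : IsCompl A A') (B : A' →ₗ[K] A) (u v : A') : A' :=
  A'.linearProjOfIsCompl A hcompl.symm
    (m (((B u : A) : 𝓐) + (u : 𝓐)) (((B v : A) : 𝓐) + (v : 𝓐)))

lemma keyL {K 𝓐 : Type*} [Field K] [AddCommGroup 𝓐] [Module K 𝓐]
    (m : 𝓐 →ₗ[K] 𝓐 →ₗ[K] 𝓐)
    {A A' : Submodule K 𝓐} (hcompl : IsCompl A A') (B : A' →ₗ[K] A)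
    (hgr : ∀ u v : A', ∃ w : A',
      m (((B u : A) : 𝓐) + (u : 𝓐)) (((B v : A) : 𝓐) + (v : 𝓐))
        = ((B w : A) : 𝓐) + (w : 𝓐)) (u v : A') :
    ((B (betaB m hcompl B u v) : A) : 𝓐) + ((betaB m hcompl B u v : A') : 𝓐)
      = m (((B u : A) : 𝓐) + (u : 𝓐)) (((B v : A) : 𝓐) + (v : 𝓐)) := by
  obtain ⟨w, hw⟩ := hgr u v
  have hb : betaB m hcompl B u v = w := by
    unfold betaB
    rw [hw]
    rw [map_add]
    unfold Submodule.linearProjOfIsCompl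
    rw [Submodule.projectionOnto_apply_left hcompl.symm w,
      Submodule.projectionOnto_apply_right hcompl.symm (B w)]
    simp
  rw [hb, hw]

/-- if `B : A' → A` is a left deformation map of a quasi-twilled
associative algebra `(𝒜, A, A')` (the set `{B(u) + u : u ∈ A'}` is closed under the
multiplication), then `β^B` is an associative product on `A'`. -/
theorem stmt12 {K 𝓐 : Type*} [Field K] [AddCommGroup 𝓐] [Module K 𝓐]
    (m : 𝓐 →ₗ[K] 𝓐 →ₗ[K] 𝓐)
    (assoc : ∀ a b c : 𝓐, m (m a b) c = m a (m b c))
    (A A' : Submodule K 𝓐) (hcompl : IsCompl A A')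
    (hA' : ∀ u ∈ A', ∀ v ∈ A', m u v ∈ A')
    (B : A' →ₗ[K] A)
    (hgr : ∀ u v : A', ∃ w : A',
      m (((B u : A) : 𝓐) + (u : 𝓐)) (((B v : A) : 𝓐) + (v : 𝓐))
        = ((B w : A) : 𝓐) + (w : 𝓐)) :
    ∀ u v w : A',
      betaB m hcompl B (betaB m hcompl B u v) w
        = betaB m hcompl B u (betaB m hcompl B v w) := by
  intro u v w
  show A'.linearProjOfIsCompl A hcompl.symm _ = A'.linearProjOfIsCompl A hcompl.symm _
  congr 1
  rw [keyL m hcompl B hgr u v, keyL m hcompl B hgr v w, assoc]
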